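/- Let θ be a partial action of an inverse semigroupoid S on a set X. Then θ is a global action (X_s = X_{ss*} for all s) if and only if θ_{st} = θ_s ∘ θ_t exactly (equal domains) for every composable pair (s,t). -/
import Mathlib


structure InvSgpd (S : Type*) (O : Type*) where
  d : S → O
  c : S → O
  mul : S → S → S
  d_mul : ∀ s t, d s = c t → d (mul s t) = d t
  c_mul : ∀ s t, d s = c t → c (mul s t) = c s
  assoc : ∀ p s t, d p = c s → d s = c t → mul (mul p s) t = mul p (mul s t)
  inv : S → S
  comp_inv : ∀ s, d s = c (inv s)
  inv_comp : ∀ s, d (inv s) = c s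
  mul_inv_mul : ∀ s, mul (mul s (inv s)) s = s
  inv_mul_inv : ∀ s, mul (mul (inv s) s) (inv s) = inv s
  inv_unique : ∀ s t, d s = c t → d t = c s →
    mul (mul s t) s = s → mul (mul t s) t = t → t = inv s

namespace InvSgpd
variable {S O : Type*} (G : InvSgpd S O)
def Composable (s t : S) : Prop := G.d s = G.c t
def Idem (e : S) : Prop := G.Composable e e ∧ G.mul e e = e
def le (s t : S) : Prop :=
  G.d s = G.d t ∧ G.c s = G.c t ∧ s = G.mul t (G.mul (G.inv s) s)
end InvSgpd

/-- A partial action of an inverse semigroupoid `G` on a set (type) `X`: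
`dom s` plays the role of `X_s` and `act s` the role of `θ_s : X_{s*} → X_s`
(as a total map whose values are only relevant on `dom (G.inv s)`). -/
structure PAction {S O : Type*} (G : InvSgpd S O) (X : Type*) where
  dom : S → Set X
  act : S → X → X
  maps : ∀ s, ∀ x ∈ dom (G.inv s), act s x ∈ dom s
  /-- (P1) `θ_e = id_{X_e}` for idempotents. -/
  idem_id : ∀ e, G.Idem e → ∀ x ∈ dom e, act e x = x
  /-- (P1) every point lies in some `X_e` with `e` idempotent. -/
  cover : ∀ x : X, ∃ e, G.Idem e ∧ x ∈ dom e
  /-- (P2) `X_s ⊆ X_{ss*}`. -/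
  dom_mono : ∀ s, dom s ⊆ dom (G.mul s (G.inv s))
  /-- (P3) `θ_t⁻¹(X_t ∩ X_{s*}) = X_{(st)*} ∩ X_{t*}` for composable `(s,t)`. -/
  preimage_eq : ∀ s t, G.Composable s t →
    {x | x ∈ dom (G.inv t) ∧ act t x ∈ dom t ∩ dom (G.inv s)}
      = dom (G.inv (G.mul s t)) ∩ dom (G.inv t)
  /-- (P3) `θ_s (θ_t x) = θ_{st} x` on `X_{(st)*} ∩ X_{t*}`. -/
  mul_act : ∀ s t, G.Composable s t →
    ∀ x ∈ dom (G.inv (G.mul s t)) ∩ dom (G.inv t),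
      act s (act t x) = act (G.mul s t) x

namespace PAction
variable {S O X : Type*} {G : InvSgpd S O}

/-- A partial action is global when `X_s = X_{ss*}` for every `s`. -/
def IsGlobal (θ : PAction G X) : Prop := ∀ s, θ.dom s = θ.dom (G.mul s (G.inv s))

end PAction

/-! ### Auxiliary inverse-semigroupoid algebra -/

namespace InvSgpd
variable {S O : Type*} (G : InvSgpd S O)

theorem inv_inv' (s : S) : G.inv (G.inv s) = s :=
  (G.inv_unique (G.inv s) s (G.inv_comp s) (G.comp_inv s) (G.inv_mul_inv s)
    (G.mul_inv_mul s)).symm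

theorem idem_inv' {e : S} (he : G.Idem e) : G.inv e = e :=
  (G.inv_unique e e he.1 he.1 (by rw [he.2, he.2]) (by rw [he.2, he.2])).symm

theorem idem_inv_mul' (s : S) : G.Idem (G.mul (G.inv s) s) := by
  have hd : G.d (G.mul (G.inv s) s) = G.d s := G.d_mul _ _ (G.inv_comp s)
  have hc : G.c (G.mul (G.inv s) s) = G.d s :=
    (G.c_mul _ _ (G.inv_comp s)).trans (G.comp_inv s).symm
  refine ⟨hd.trans hc.symm, ?_⟩
  have ha : G.mul (G.mul (G.mul (G.inv s) s) (G.inv s)) s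
      = G.mul (G.mul (G.inv s) s) (G.mul (G.inv s) s) :=
    G.assoc _ _ _ (hd.trans (G.comp_inv s)) (G.inv_comp s)
  rw [← ha, G.inv_mul_inv]

theorem idem_mul_inv' (s : S) : G.Idem (G.mul s (G.inv s)) := by
  have := G.idem_inv_mul' (G.inv s)
  rwa [G.inv_inv'] at this

/-- Product of composable idempotents is idempotent. -/
theorem idem_mul' {e f : S} (he : G.Idem e) (hf : G.Idem f) (h : G.d e = G.c f) :
    G.Idem (G.mul e f) := by
  set o := G.c f with ho
  have He : G.d e = o ∧ G.c e = o := ⟨h, he.1.symm.trans h⟩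
  have Hf : G.d f = o ∧ G.c f = o := ⟨hf.1, rfl⟩
  have P : ∀ a b : S, (G.d a = o ∧ G.c a = o) → (G.d b = o ∧ G.c b = o) →
      G.d (G.mul a b) = o ∧ G.c (G.mul a b) = o := by
    intro a b ha hb
    have hc : G.d a = G.c b := ha.1.trans hb.2.symm
    exact ⟨(G.d_mul a b hc).trans hb.1, (G.c_mul a b hc).trans ha.2⟩
  have A : ∀ a b c : S, (G.d a = o ∧ G.c a = o) → (G.d b = o ∧ G.c b = o) →
      (G.d c = o ∧ G.c c = o) → G.mul (G.mul a b) c = G.mul a (G.mul b c) := by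
    intro a b c ha hb hc
    exact G.assoc a b c (ha.1.trans hb.2.symm) (hb.1.trans hc.2.symm)
  set u := G.mul e f with hu
  have Hu : G.d u = o ∧ G.c u = o := P e f He Hf
  set x := G.inv u with hx
  have Hx : G.d x = o ∧ G.c x = o :=
    ⟨(G.inv_comp u).trans Hu.2, (G.comp_inv u).symm.trans Hu.1⟩
  have Hfx := P f x Hf Hx
  set y := G.mul (G.mul f x) e with hy
  have Hy := P _ e Hfx He
  have Hux := P u x Hu Hx
  have hxu : G.mul (G.mul x u) x = x := by rw [hx]; exact G.inv_mul_inv u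
  have k1 : G.mul u f = u := by
    rw [hu, A e f f He Hf Hf, hf.2]
  have k2 : G.mul e u = u := by
    rw [hu, ← A e e f He He Hf, he.2]
  have k3 : G.mul (G.mul f x) (G.mul u x) = G.mul f x := by
    rw [A f x (G.mul u x) Hf Hx Hux, ← A x u x Hx Hu Hx, hxu]
  have k4 : G.mul u y = G.mul (G.mul u x) e := by
    rw [hy, ← A u (G.mul f x) e Hu Hfx He, ← A u f x Hu Hf Hx, k1]
  have k5 : G.mul e y = G.mul (G.mul u x) e := by
    rw [hy, ← A e (G.mul f x) e He Hfx He, ← A e f x He Hf Hx, ← hu]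
  have p3 : G.mul y y = y := by
    nth_rewrite 1 [hy]
    rw [A (G.mul f x) e y Hfx He Hy, k5, ← A (G.mul f x) (G.mul u x) e Hfx Hux He, k3, ← hy]
  have p1 : G.mul (G.mul u y) u = u := by
    rw [k4, A (G.mul u x) e u Hux He Hu, k2, hx, G.mul_inv_mul]
  have p2 : G.mul (G.mul y u) y = y := by
    have hyu : G.mul y u = G.mul (G.mul f x) u := by
      rw [hy, A (G.mul f x) e u Hfx He Hu, k2]
    rw [hyu, A (G.mul f x) u y Hfx Hu Hy, k4,
      ← A (G.mul f x) (G.mul u x) e Hfx Hux He, k3, ← hy]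
  have hyx : y = x :=
    G.inv_unique u y (Hu.1.trans Hy.2.symm) (Hy.1.trans Hu.2.symm) p1 p2
  have hIx : G.Idem x := ⟨Hx.1.trans Hx.2.symm, by rw [← hyx, p3]⟩
  have hxeq : G.inv x = u := by rw [hx, G.inv_inv']
  have hux2 : u = x := hxeq.symm.trans (G.idem_inv' hIx)
  exact ⟨Hu.1.trans Hu.2.symm, by rw [hux2, hIx.2]⟩

theorem comm_aux {e f : S} (he : G.Idem e) (hf : G.Idem f) (h : G.d e = G.c f) :
    G.mul (G.mul (G.mul e f) (G.mul f e)) (G.mul e f) = G.mul e f := by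
  set o := G.c f with ho
  have He : G.d e = o ∧ G.c e = o := ⟨h, he.1.symm.trans h⟩
  have Hf : G.d f = o ∧ G.c f = o := ⟨hf.1, rfl⟩
  have P : ∀ a b : S, (G.d a = o ∧ G.c a = o) → (G.d b = o ∧ G.c b = o) →
      G.d (G.mul a b) = o ∧ G.c (G.mul a b) = o := by
    intro a b ha hb
    have hc : G.d a = G.c b := ha.1.trans hb.2.symm
    exact ⟨(G.d_mul a b hc).trans hb.1, (G.c_mul a b hc).trans ha.2⟩
  have A : ∀ a b c : S, (G.d a = o ∧ G.c a = o) → (G.d b = o ∧ G.c b = o) →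
      (G.d c = o ∧ G.c c = o) → G.mul (G.mul a b) c = G.mul a (G.mul b c) := by
    intro a b c ha hb hc
    exact G.assoc a b c (ha.1.trans hb.2.symm) (hb.1.trans hc.2.symm)
  have Hfe := P f e Hf He
  have Hef := P e f He Hf
  rw [A e f (G.mul f e) He Hf Hfe, ← A f f e Hf Hf He, hf.2, ← A e f e He Hf He,
    A (G.mul e f) e (G.mul e f) Hef He Hef, ← A e e f He He Hf, he.2]
  exact (G.idem_mul' he hf h).2

/-- Composable idempotents commute. -/
theorem idem_comm' {e f : S} (he : G.Idem e) (hf : G.Idem f) (h : G.d e = G.c f) :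
    G.mul e f = G.mul f e := by
  have h' : G.d f = G.c e := hf.1.trans (h.symm.trans he.1)
  have q1 := G.comm_aux he hf h
  have q2 := G.comm_aux hf he h'
  have hd1 : G.d (G.mul e f) = G.c (G.mul f e) :=
    (G.d_mul e f h).trans (hf.1.trans (G.c_mul f e h').symm)
  have hd2 : G.d (G.mul f e) = G.c (G.mul e f) :=
    (G.d_mul f e h').trans (he.1.trans (G.c_mul e f h).symm)
  have hv := G.inv_unique (G.mul e f) (G.mul f e) hd1 hd2 q1 q2
  rw [hv, G.idem_inv' (G.idem_mul' he hf h)]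

theorem inv_mul_aux (s t : S) (h : G.d s = G.c t) :
    G.mul (G.mul (G.mul s t) (G.mul (G.inv t) (G.inv s))) (G.mul s t) = G.mul s t := by
  have hcs' : G.c (G.inv s) = G.d s := (G.comp_inv s).symm
  have hct' : G.c (G.inv t) = G.d t := (G.comp_inv t).symm
  have hdE : G.d (G.mul (G.inv s) s) = G.d s := G.d_mul _ _ (G.inv_comp s)
  have hcE : G.c (G.mul (G.inv s) s) = G.d s := (G.c_mul _ _ (G.inv_comp s)).trans hcs'
  have hdF : G.d (G.mul t (G.inv t)) = G.c t := (G.d_mul _ _ (G.comp_inv t)).trans (G.inv_comp t)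
  have hcF : G.c (G.mul t (G.inv t)) = G.c t := G.c_mul _ _ (G.comp_inv t)
  have cond2 : G.d (G.inv t) = G.c (G.inv s) := (G.inv_comp t).trans (h.symm.trans hcs'.symm)
  have c1 : G.c (G.mul (G.inv t) (G.inv s)) = G.d t := (G.c_mul _ _ cond2).trans hct'
  have condA : G.d s = G.c (G.mul t (G.inv t)) := h.trans hcF.symm
  have condB : G.d (G.mul t (G.inv t)) = G.c (G.inv s) := hdF.trans (h.symm.trans hcs'.symm)
  have condC : G.d (G.mul s (G.mul t (G.inv t))) = G.c (G.inv s) :=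
    (G.d_mul s _ condA).trans condB
  have condD : G.d (G.inv s) = G.c (G.mul s t) := (G.inv_comp s).trans (G.c_mul s t h).symm
  have condE : G.d (G.mul s (G.mul t (G.inv t))) = G.c (G.mul (G.inv s) s) :=
    (G.d_mul s _ condA).trans (hdF.trans (h.symm.trans hcE.symm))
  have condF : G.d (G.mul (G.inv s) s) = G.c t := hdE.trans h
  have condG : G.d (G.mul t (G.inv t)) = G.c (G.mul (G.inv s) s) :=
    hdF.trans (h.symm.trans hcE.symm)
  have condH : G.d s = G.c (G.mul (G.inv s) s) := hcE.symm
  have condI : G.d (G.mul (G.inv s) s) = G.c (G.mul t (G.inv t)) :=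
    hdE.trans (h.trans hcF.symm)
  rw [G.assoc s t (G.mul (G.inv t) (G.inv s)) h c1.symm,
    ← G.assoc t (G.inv t) (G.inv s) (G.comp_inv t) cond2,
    ← G.assoc s (G.mul t (G.inv t)) (G.inv s) condA condB,
    G.assoc (G.mul s (G.mul t (G.inv t))) (G.inv s) (G.mul s t) condC condD,
    ← G.assoc (G.inv s) s t (G.inv_comp s) h,
    ← G.assoc (G.mul s (G.mul t (G.inv t))) (G.mul (G.inv s) s) t condE condF,
    G.assoc s (G.mul t (G.inv t)) (G.mul (G.inv s) s) condA condG,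
    G.idem_comm' (G.idem_mul_inv' t) (G.idem_inv_mul' s) condG,
    ← G.assoc s (G.mul (G.inv s) s) (G.mul t (G.inv t)) condH condI,
    ← G.assoc s (G.inv s) s (G.comp_inv s) (G.inv_comp s), G.mul_inv_mul,
    G.assoc s (G.mul t (G.inv t)) t condA hdF, G.mul_inv_mul t]

theorem inv_mul' (s t : S) (h : G.Composable s t) :
    G.inv (G.mul s t) = G.mul (G.inv t) (G.inv s) := by
  have h : G.d s = G.c t := h
  have h2 : G.d (G.inv t) = G.c (G.inv s) :=
    (G.inv_comp t).trans (h.symm.trans (G.comp_inv s))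
  have q1 := G.inv_mul_aux s t h
  have q2 := G.inv_mul_aux (G.inv t) (G.inv s) h2
  rw [G.inv_inv', G.inv_inv'] at q2
  have hd1 : G.d (G.mul s t) = G.c (G.mul (G.inv t) (G.inv s)) :=
    (G.d_mul s t h).trans (((G.c_mul (G.inv t) (G.inv s) h2).trans (G.comp_inv t).symm).symm)
  have hd2 : G.d (G.mul (G.inv t) (G.inv s)) = G.c (G.mul s t) :=
    (G.d_mul _ _ h2).trans ((G.inv_comp s).trans (G.c_mul s t h).symm)
  exact (G.inv_unique (G.mul s t) (G.mul (G.inv t) (G.inv s)) hd1 hd2 q1 q2).symm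

theorem absorb (s t : S) (h : G.d s = G.c t) :
    G.mul (G.mul (G.inv t) t) (G.mul (G.inv (G.mul s t)) (G.mul s t))
      = G.mul (G.inv (G.mul s t)) (G.mul s t) := by
  have hcs' : G.c (G.inv s) = G.d s := (G.comp_inv s).symm
  have hct' : G.c (G.inv t) = G.d t := (G.comp_inv t).symm
  have cond2 : G.d (G.inv t) = G.c (G.inv s) := (G.inv_comp t).trans (h.symm.trans hcs'.symm)
  have cond3 : G.d (G.inv s) = G.c (G.mul s t) := (G.inv_comp s).trans (G.c_mul s t h).symm
  have cond4 : G.d (G.mul (G.inv t) t) = G.c (G.inv t) :=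
    (G.d_mul _ _ (G.inv_comp t)).trans hct'.symm
  have cond5 : G.d (G.inv t) = G.c (G.mul (G.inv s) (G.mul s t)) :=
    (G.inv_comp t).trans (h.symm.trans (hcs'.symm.trans (G.c_mul _ _ cond3).symm))
  rw [G.inv_mul' s t h,
    G.assoc (G.inv t) (G.inv s) (G.mul s t) cond2 cond3,
    ← G.assoc (G.mul (G.inv t) t) (G.inv t) (G.mul (G.inv s) (G.mul s t)) cond4 cond5,
    G.inv_mul_inv t]

end InvSgpd

/-- A partial action is global iff `θ_{st} = θ_s ∘ θ_t` with equal domains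
for every composable pair `(s,t)`. -/
theorem isGlobal_iff {S O X : Type*} (G : InvSgpd S O) (θ : PAction G X) :
    θ.IsGlobal ↔
      ∀ s t, G.Composable s t →
        {x | x ∈ θ.dom (G.inv t) ∧ θ.act t x ∈ θ.dom t ∩ θ.dom (G.inv s)}
          = θ.dom (G.inv (G.mul s t)) := by
  constructor
  · intro hg s t hst
    rw [θ.preimage_eq s t hst]
    refine Set.inter_eq_left.mpr ?_
    have hst' : G.d s = G.c t := hst
    have h1 : θ.dom (G.inv (G.mul s t)) = θ.dom (G.mul (G.inv (G.mul s t)) (G.mul s t)) := by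
      have := hg (G.inv (G.mul s t)); rwa [G.inv_inv'] at this
    have h2 : θ.dom (G.inv t) = θ.dom (G.mul (G.inv t) t) := by
      have := hg (G.inv t); rwa [G.inv_inv'] at this
    rw [h1, h2]
    set u := G.mul s t with hu
    set e := G.mul (G.inv u) u with he
    set f := G.mul (G.inv t) t with hf
    have hIe : G.Idem e := G.idem_inv_mul' u
    have hIf : G.Idem f := G.idem_inv_mul' t
    have hcomp : G.Composable f e := by
      show G.d f = G.c e
      rw [hf, he, G.d_mul _ _ (G.inv_comp t), G.c_mul _ _ (G.inv_comp u), ← G.comp_inv u,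
        hu, G.d_mul s t hst']
    have hfe : G.mul f e = e := by
      rw [he, hf, hu]; exact G.absorb s t hst'
    have key := θ.preimage_eq f e hcomp
    rw [hfe, G.idem_inv' hIe, G.idem_inv' hIf, Set.inter_self] at key
    intro x hx
    have hx' : x ∈ {x | x ∈ θ.dom e ∧ θ.act e x ∈ θ.dom e ∩ θ.dom f} := by
      rw [key]; exact hx
    have hmem := hx'.2
    rw [θ.idem_id e hIe x hx'.1] at hmem
    exact hmem.2
  · intro hc s
    apply Set.Subset.antisymm (θ.dom_mono s)
    have h : G.Composable s (G.inv s) := G.comp_inv s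
    have h1 := θ.preimage_eq s (G.inv s) h
    have h2 := hc s (G.inv s) h
    rw [h2] at h1
    have hI : G.Idem (G.mul s (G.inv s)) := G.idem_mul_inv' s
    rw [G.idem_inv' hI, G.inv_inv'] at h1
    intro x hx
    exact (h1 ▸ hx).2
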